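/- On a cycle graph with V ≥ 5 vertices, the sliding puzzle with two spin labels is not connected: there exist two configurations with the same numbers of up and down labels and the same hole position that cannot be transformed into each other by hole moves, provided each label occurs at least twice. -/

import Mathlib

/-- A move in the sliding puzzle: the hole at vertex `a` is transposed with the
tile at an adjacent vertex `b`. -/
def PMove {V L : Type*} [DecidableEq V] (adj : V → V → Prop)
    (c c' : V → Option L) : Prop :=
  ∃ a b, adj a b ∧ c a = none ∧ c' = c ∘ Equiv.swap a b

/-- Reachability by a finite sequence of hole moves. -/
def PReach {V L : Type*} [DecidableEq V] (adj : V → V → Prop) :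
    (V → Option L) → (V → Option L) → Prop :=
  Relation.ReflTransGen (PMove adj)

/-- Adjacency on the cycle graph `C_V` with vertices `ZMod V`. -/
def cycAdj (V : ℕ) (i j : ZMod V) : Prop := j = i + 1 ∨ i = j + 1

section Aux
variable {V : ℕ} [NeZero V]

/-- `Pat c i`: a `true` at `i` followed by a `true`, possibly skipping the hole. -/
def Pat (c : ZMod V → Option Bool) (i : ZMod V) : Prop :=
  c i = some true ∧ (c (i+1) = some true ∨ (c (i+1) = none ∧ c (i+2) = some true))

instance (c : ZMod V → Option Bool) : DecidablePred (Pat c) := fun i => by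
  unfold Pat; infer_instance

def Ninv (c : ZMod V → Option Bool) : ℕ := (Finset.univ.filter (Pat c)).card

lemma natCast_ne (hV : 5 ≤ V) {m n : ℕ} (hm : m < 5) (hn : n < 5) (h : m ≠ n) :
    (m : ZMod V) ≠ n := by
  intro hmn; apply h
  have h2 := congrArg ZMod.val hmn
  rwa [ZMod.val_cast_of_lt (by omega), ZMod.val_cast_of_lt (by omega)] at h2

lemma k1 (hV : 5 ≤ V) : (1 : ZMod V) ≠ 0 := by
  simpa using natCast_ne hV (m := 1) (n := 0) (by omega) (by omega) (by omega)
lemma k2 (hV : 5 ≤ V) : (2 : ZMod V) ≠ 0 := by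
  simpa using natCast_ne hV (m := 2) (n := 0) (by omega) (by omega) (by omega)
lemma k3 (hV : 5 ≤ V) : (3 : ZMod V) ≠ 0 := by
  simpa using natCast_ne hV (m := 3) (n := 0) (by omega) (by omega) (by omega)

lemma filter_perm_card {α : Type*} [Fintype α] [DecidableEq α] (e : Equiv.Perm α)
    (p : α → Prop) [DecidablePred p] :
    (Finset.univ.filter fun i => p (e i)).card = (Finset.univ.filter p).card := by
  have : (Finset.univ.filter fun i => p (e i)) =
      (Finset.univ.filter p).map e.symm.toEmbedding := by
    ext i
    simp only [Finset.mem_filter, Finset.mem_univ, true_and, Finset.mem_map,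
      Equiv.coe_toEmbedding]
    constructor
    · intro h; exact ⟨e i, h, e.symm_apply_apply i⟩
    · rintro ⟨j, hj, rfl⟩; simpa using hj
  rw [this, Finset.card_map]

lemma move_inv (hV : 5 ≤ V) {c c' : ZMod V → Option Bool}
    (hm : PMove (cycAdj V) c c') (h : ∃ h0, ∀ v, c v = none ↔ v = h0) :
    (∃ h0, ∀ v, c' v = none ↔ v = h0) ∧ Ninv c' = Ninv c := by
  obtain ⟨a, b, hab, ha, rfl⟩ := hm
  obtain ⟨h0, hh⟩ := h
  have ea : a = h0 := (hh a).mp ha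
  subst ea
  have hna : ∀ v, v ≠ a → c v ≠ none := fun v hv hn => hv ((hh v).mp hn)
  have h1 := k1 hV
  have h2 := k2 hV
  have h3 := k3 hV
  have key : ∀ i, Pat (c ∘ Equiv.swap a b) i ↔ Pat c (Equiv.swap a b i) := by
    rcases hab with hb | hb
    · -- b = a + 1
      subst hb
      have e1 : a + 1 ≠ a := fun h => h1 (by linear_combination h)
      have e2 : a + 2 ≠ a := fun h => h2 (by linear_combination h)
      have e3 : a + 2 ≠ a + 1 := fun h => h1 (by linear_combination h)
      have e4 : a - 1 ≠ a := fun h => h1 (by linear_combination -h)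
      have e5 : a - 1 ≠ a + 1 := fun h => h2 (by linear_combination -h)
      have e6 : a - 2 ≠ a := fun h => h2 (by linear_combination -h)
      have e7 : a - 2 ≠ a + 1 := fun h => h3 (by linear_combination -h)
      have hc1 : c (a+1) ≠ none := hna _ e1
      have hc2 : c (a+2) ≠ none := hna _ e2
      have hcm1 : c (a-1) ≠ none := hna _ e4
      intro i
      by_cases hia : i = a
      · rw [hia]
        simp only [Pat, Function.comp_apply]
        rw [Equiv.swap_apply_left, Equiv.swap_apply_right,
          Equiv.swap_apply_of_ne_of_ne e2 e3,
          show a + 1 + 1 = a + 2 from by ring, show a + 1 + 2 = a + 3 from by ring, ha]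
        simp [hc2]
      by_cases hib : i = a + 1
      · subst hib
        simp only [Pat, Function.comp_apply]
        rw [Equiv.swap_apply_right, ha]
        simp
      by_cases hic : i = a - 1
      · subst hic
        simp only [Pat, Function.comp_apply]
        rw [Equiv.swap_apply_of_ne_of_ne e4 e5,
          show a - 1 + 1 = a from by ring, show a - 1 + 2 = a + 1 from by ring,
          Equiv.swap_apply_left, Equiv.swap_apply_right, ha]
        simp [hc1]
      by_cases hid : i = a - 2
      · subst hid
        simp only [Pat, Function.comp_apply]
        rw [Equiv.swap_apply_of_ne_of_ne e6 e7,
          show a - 2 + 1 = a - 1 from by ring, show a - 2 + 2 = a from by ring,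
          Equiv.swap_apply_of_ne_of_ne e4 e5, Equiv.swap_apply_left, ha]
        simp [hcm1]
      · have n1 : i + 1 ≠ a := fun h => hic (by linear_combination h)
        have n2 : i + 1 ≠ a + 1 := fun h => hia (by linear_combination h)
        have n3 : i + 2 ≠ a := fun h => hid (by linear_combination h)
        have n4 : i + 2 ≠ a + 1 := fun h => hic (by linear_combination h)
        simp only [Pat, Function.comp_apply]
        rw [Equiv.swap_apply_of_ne_of_ne hia hib, Equiv.swap_apply_of_ne_of_ne n1 n2,
          Equiv.swap_apply_of_ne_of_ne n3 n4]
    · -- a = b + 1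
      obtain rfl : b = a - 1 := by linear_combination -hb
      have e1 : a + 1 ≠ a := fun h => h1 (by linear_combination h)
      have e2 : a + 2 ≠ a := fun h => h2 (by linear_combination h)
      have e1' : a + 1 ≠ a - 1 := fun h => h2 (by linear_combination h)
      have e2' : a + 2 ≠ a - 1 := fun h => h3 (by linear_combination h)
      have e4 : a - 1 ≠ a := fun h => h1 (by linear_combination -h)
      have e6 : a - 2 ≠ a := fun h => h2 (by linear_combination -h)
      have e8 : a - 2 ≠ a - 1 := fun h => h1 (by linear_combination -h)
      have e9 : a - 3 ≠ a := fun h => h3 (by linear_combination -h)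
      have e10 : a - 3 ≠ a - 1 := fun h => h2 (by linear_combination -h)
      have hc1 : c (a+1) ≠ none := hna _ e1
      have hcm1 : c (a-1) ≠ none := hna _ e4
      have hcm2 : c (a-2) ≠ none := hna _ e6
      intro i
      by_cases hia : i = a
      · rw [hia]
        simp only [Pat, Function.comp_apply]
        rw [Equiv.swap_apply_left,
          show a - 1 + 1 = a from by ring, show a - 1 + 2 = a + 1 from by ring,
          Equiv.swap_apply_of_ne_of_ne e1 e1', Equiv.swap_apply_of_ne_of_ne e2 e2', ha]
        simp [hc1]
      by_cases hib : i = a - 1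
      · subst hib
        simp only [Pat, Function.comp_apply]
        rw [Equiv.swap_apply_right, ha]
        simp
      by_cases hic : i = a - 2
      · subst hic
        simp only [Pat, Function.comp_apply]
        rw [Equiv.swap_apply_of_ne_of_ne e6 e8,
          show a - 2 + 1 = a - 1 from by ring, show a - 2 + 2 = a from by ring,
          Equiv.swap_apply_right, Equiv.swap_apply_left, ha]
        simp [hcm1]
      by_cases hid : i = a - 3
      · subst hid
        simp only [Pat, Function.comp_apply]
        rw [Equiv.swap_apply_of_ne_of_ne e9 e10,
          show a - 3 + 1 = a - 2 from by ring, show a - 3 + 2 = a - 1 from by ring,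
          Equiv.swap_apply_of_ne_of_ne e6 e8, Equiv.swap_apply_right, ha]
        simp [hcm2]
      · have n1 : i + 1 ≠ a := fun h => hib (by linear_combination h)
        have n2 : i + 1 ≠ a - 1 := fun h => hic (by linear_combination h)
        have n3 : i + 2 ≠ a := fun h => hic (by linear_combination h)
        have n4 : i + 2 ≠ a - 1 := fun h => hid (by linear_combination h)
        simp only [Pat, Function.comp_apply]
        rw [Equiv.swap_apply_of_ne_of_ne hia hib, Equiv.swap_apply_of_ne_of_ne n1 n2,
          Equiv.swap_apply_of_ne_of_ne n3 n4]
  constructor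
  · refine ⟨b, fun v => ?_⟩
    simp only [Function.comp_apply]
    rw [hh]
    simp [Equiv.swap_apply_eq_iff]
  · unfold Ninv
    calc (Finset.univ.filter (Pat (c ∘ Equiv.swap a b))).card
        = (Finset.univ.filter fun i => Pat c (Equiv.swap a b i)).card := by
          congr 1; apply Finset.filter_congr; intro i _; simp [key i]
      _ = (Finset.univ.filter (Pat c)).card := filter_perm_card _ _

lemma reach_inv (hV : 5 ≤ V) {c c' : ZMod V → Option Bool}
    (hr : PReach (cycAdj V) c c')
    (h : ∃ h0 : ZMod V, ∀ v, c v = none ↔ v = h0) :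
    Ninv c' = Ninv c := by
  suffices H : (∃ h0 : ZMod V, ∀ v, c' v = none ↔ v = h0) ∧ Ninv c' = Ninv c from H.2
  induction hr with
  | refl => exact ⟨h, rfl⟩
  | tail _ hstep ih =>
    obtain ⟨hu, hN⟩ := ih
    obtain ⟨hu', hN'⟩ := move_inv hV hstep hu
    exact ⟨hu', hN'.trans hN⟩
end Aux


/-- On a cycle with `V ≥ 5` vertices, the two-label sliding puzzle is not connected:
there are two configurations with the same hole position and the same numbers of
up- and down-labels, each label occurring at least twice, which are not related
by any sequence of hole moves. -/
theorem stmt2 (V : ℕ) [NeZero V] (hV : 5 ≤ V) :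
    ∃ c c' : ZMod V → Option Bool,
      (∃ h : ZMod V, (∀ v, c v = none ↔ v = h) ∧ (∀ v, c' v = none ↔ v = h)) ∧
      (Finset.univ.filter fun v => c v = some true).card =
        (Finset.univ.filter fun v => c' v = some true).card ∧
      (Finset.univ.filter fun v => c v = some false).card =
        (Finset.univ.filter fun v => c' v = some false).card ∧
      2 ≤ (Finset.univ.filter fun v => c v = some true).card ∧
      2 ≤ (Finset.univ.filter fun v => c v = some false).card ∧
      ¬ PReach (cycAdj V) c c' := by
  -- distinctness of small numerals in `ZMod V`
  have nn : ∀ m n : ℕ, m < 5 → n < 5 → m ≠ n → (m : ZMod V) ≠ (n : ZMod V) :=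
    fun m n hm hn h => natCast_ne hV hm hn h
  have d10 : (1 : ZMod V) ≠ 0 := by simpa using nn 1 0 (by omega) (by omega) (by omega)
  have d20 : (2 : ZMod V) ≠ 0 := by simpa using nn 2 0 (by omega) (by omega) (by omega)
  have d30 : (3 : ZMod V) ≠ 0 := by simpa using nn 3 0 (by omega) (by omega) (by omega)
  have d40 : (4 : ZMod V) ≠ 0 := by simpa using nn 4 0 (by omega) (by omega) (by omega)
  have d21 : (2 : ZMod V) ≠ 1 := by simpa using nn 2 1 (by omega) (by omega) (by omega)
  have d31 : (3 : ZMod V) ≠ 1 := by simpa using nn 3 1 (by omega) (by omega) (by omega)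
  have d41 : (4 : ZMod V) ≠ 1 := by simpa using nn 4 1 (by omega) (by omega) (by omega)
  have d32 : (3 : ZMod V) ≠ 2 := by simpa using nn 3 2 (by omega) (by omega) (by omega)
  have d43 : (4 : ZMod V) ≠ 3 := by simpa using nn 4 3 (by omega) (by omega) (by omega)
  set c : ZMod V → Option Bool :=
    fun v => if v = 0 then none else if v = 1 ∨ v = 2 then some true else some false with hc
  set c' : ZMod V → Option Bool :=
    fun v => if v = 0 then none else if v = 1 ∨ v = 3 then some true else some false with hc'
  refine ⟨c, c', ⟨0, ?_, ?_⟩, ?_, ?_, ?_, ?_, ?_⟩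
  · intro v; simp only [hc]; split_ifs with h h2 <;> simp [h, *]
  · intro v; simp only [hc']; split_ifs with h h2 <;> simp [h, *]
  · -- true counts
    have ht : (Finset.univ.filter fun v => c v = some true) = {1, 2} := by
      ext v
      simp only [Finset.mem_filter, Finset.mem_univ, true_and, Finset.mem_insert,
        Finset.mem_singleton, hc]
      split_ifs with h h2
      · simp [h, d10.symm, d20.symm]
      · simpa using h2
      · simpa using h2
    have ht' : (Finset.univ.filter fun v => c' v = some true) = {1, 3} := by
      ext v
      simp only [Finset.mem_filter, Finset.mem_univ, true_and, Finset.mem_insert,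
        Finset.mem_singleton, hc']
      split_ifs with h h2
      · simp [h, d10.symm, d30.symm]
      · simpa using h2
      · simpa using h2
    rw [ht, ht']
    rw [Finset.card_insert_of_notMem (by simp [d21.symm]),
      Finset.card_insert_of_notMem (by simp [d31.symm])]
    simp
  · -- false counts
    have hf : (Finset.univ.filter fun v => c v = some false) = Finset.univ \ {0, 1, 2} := by
      ext v
      simp only [Finset.mem_filter, Finset.mem_univ, true_and, Finset.mem_sdiff,
        Finset.mem_insert, Finset.mem_singleton, hc]
      split_ifs with h h2 <;> simp_all
    have hf' : (Finset.univ.filter fun v => c' v = some false) = Finset.univ \ {0, 1, 3} := by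
      ext v
      simp only [Finset.mem_filter, Finset.mem_univ, true_and, Finset.mem_sdiff,
        Finset.mem_insert, Finset.mem_singleton, hc']
      split_ifs with h h2 <;> simp_all
    rw [hf, hf', Finset.card_sdiff_of_subset (Finset.subset_univ _),
      Finset.card_sdiff_of_subset (Finset.subset_univ _)]
    congr 1
    rw [Finset.card_insert_of_notMem (by simp [d10.symm, d20.symm]),
      Finset.card_insert_of_notMem (by simp [d21.symm]),
      Finset.card_insert_of_notMem (by simp [d10.symm, d30.symm]),
      Finset.card_insert_of_notMem (by simp [d31.symm])]
    simp
  · -- 2 ≤ true count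
    have ht : (Finset.univ.filter fun v => c v = some true) = {1, 2} := by
      ext v
      simp only [Finset.mem_filter, Finset.mem_univ, true_and, Finset.mem_insert,
        Finset.mem_singleton, hc]
      split_ifs with h h2
      · simp [h, d10.symm, d20.symm]
      · simpa using h2
      · simpa using h2
    rw [ht, Finset.card_insert_of_notMem (by simp [d21.symm]), Finset.card_singleton]
  · -- 2 ≤ false count
    have hf : (Finset.univ.filter fun v => c v = some false) = Finset.univ \ {0, 1, 2} := by
      ext v
      simp only [Finset.mem_filter, Finset.mem_univ, true_and, Finset.mem_sdiff,
        Finset.mem_insert, Finset.mem_singleton, hc]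
      split_ifs with h h2 <;> simp_all
    rw [hf, Finset.card_sdiff_of_subset (Finset.subset_univ _)]
    have : ({0, 1, 2} : Finset (ZMod V)).card ≤ 3 := by
      apply le_trans (Finset.card_insert_le _ _)
      simp [Finset.card_insert_le]
      exact Nat.lt_of_le_of_lt (Finset.card_insert_le _ _) (by simp)
    have hcu : (Finset.univ : Finset (ZMod V)).card = V := by
      simp [ZMod.card]
    omega
  · -- not reachable
    intro hr
    have hu : ∃ h0 : ZMod V, ∀ v, c v = none ↔ v = h0 := by
      refine ⟨0, fun v => ?_⟩
      simp only [hc]; split_ifs with h h2 <;> simp [h, *]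
    have hNN := reach_inv hV hr hu
    -- compute Ninv c = 1
    have d42 : (4 : ZMod V) ≠ 2 := by simpa using nn 4 2 (by omega) (by omega) (by omega)
    have hvc : c 0 = none := by simp [hc]
    have hvc1 : c 1 = some true := by simp [hc, d10]
    have hvc2 : c 2 = some true := by simp [hc, d20]
    have hvc3 : c 3 = some false := by simp [hc, d30, d31, d32]
    have hvc4 : c 4 = some false := by simp [hc, d40, d41, d42]
    have hNc : Ninv c = 1 := by
      have : (Finset.univ.filter (Pat c)) = {1} := by
        ext i
        simp only [Finset.mem_filter, Finset.mem_univ, true_and, Finset.mem_singleton]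
        constructor
        · rintro ⟨hi, hrest⟩
          -- c i = some true forces i = 1 or i = 2
          have : i = 1 ∨ i = 2 := by
            by_contra hcon
            push_neg at hcon
            simp only [hc] at hi
            split_ifs at hi with h h2
            · exact absurd h2 (by tauto)
            · simp at hi
          rcases this with h | h
          · exact h
          · exfalso
            subst h
            rw [show (2:ZMod V) + 1 = 3 from by norm_num, show (2:ZMod V) + 2 = 4 from by norm_num,
              hvc3, hvc4] at hrest
            simp at hrest
        · rintro rfl
          refine ⟨hvc1, Or.inl ?_⟩
          rw [show (1:ZMod V) + 1 = 2 from by norm_num]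
          exact hvc2
      rw [Ninv, this, Finset.card_singleton]
    have hvd1 : c' 1 = some true := by simp [hc', d10]
    have hvd2 : c' 2 = some false := by simp [hc', d20, d21, d32.symm]
    have hvd3 : c' 3 = some true := by simp [hc', d30]
    have hvd4 : c' 4 = some false := by simp [hc', d40, d41, d43]
    have hNc' : Ninv c' = 0 := by
      have : (Finset.univ.filter (Pat c')) = ∅ := by
        ext i
        simp only [Finset.mem_filter, Finset.mem_univ, true_and, Finset.notMem_empty,
          iff_false]
        rintro ⟨hi, hrest⟩
        have : i = 1 ∨ i = 3 := by
          by_contra hcon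
          push_neg at hcon
          simp only [hc'] at hi
          split_ifs at hi with h h2
          · exact absurd h2 (by tauto)
          · simp at hi
        rcases this with h | h
        · subst h
          rw [show (1:ZMod V) + 1 = 2 from by norm_num, hvd2] at hrest
          simp at hrest
        · subst h
          rw [show (3:ZMod V) + 1 = 4 from by norm_num, hvd4] at hrest
          simp at hrest
      rw [Ninv, this, Finset.card_empty]
    rw [hNc, hNc'] at hNN
    exact absurd hNN (by omega)
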